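/- Let 0 < q < 1 be real and define the Jackson integral J[f](x) := (1−q)·∑_{n≥0} f(xqⁿ)·xqⁿ for f : ℝ → ℝ. Let f, g : ℝ → ℝ and x ∈ ℝ, and assume: for every y of the form y = xqᵐ with m ≥ 0, the families (n ↦ f(yqⁿ)·yqⁿ) and (n ↦ g(yqⁿ)·yqⁿ), indexed by n ≥ 0, are summable; and the double family ((m,n) ↦ f(xq^m)·xq^m·g(xqⁿ)·xqⁿ), indexed by pairs m, n ≥ 0, is summable. Then J[f](x)·J[g](x) + (1−q)·J[f·g·id](x) = J[J[f]·g + f·J[g]](x), where id denotes the identity function y ↦ y and products of functions are pointwise. -/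

import Mathlib

/-- The Jackson integral `J[f](x) = (1−q)·∑_{n≥0} f(xqⁿ)·xqⁿ`. -/
noncomputable def jacksonIntegral (q : ℝ) (f : ℝ → ℝ) (x : ℝ) : ℝ :=
  (1 - q) * ∑' n : ℕ, f (x * q ^ n) * (x * q ^ n)

private lemma range_e1 :
    Set.range (fun p : ℕ × ℕ => (p.1 + p.2, p.1)) = {p : ℕ × ℕ | p.2 ≤ p.1} := by
  ext ⟨j, k⟩
  constructor
  · rintro ⟨⟨m, n⟩, h⟩
    simp only [Prod.mk.injEq] at h
    obtain ⟨h1, h2⟩ := h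
    simp only [Set.mem_setOf_eq]
    omega
  · intro h
    simp only [Set.mem_setOf_eq] at h
    exact ⟨(k, j - k), by simp; omega⟩

private lemma range_e2 :
    Set.range (fun p : ℕ × ℕ => (p.1, p.1 + p.2)) = {p : ℕ × ℕ | p.1 ≤ p.2} := by
  ext ⟨j, k⟩
  constructor
  · rintro ⟨⟨m, n⟩, h⟩
    simp only [Prod.mk.injEq] at h
    obtain ⟨h1, h2⟩ := h
    simp only [Set.mem_setOf_eq]
    omega
  · intro h
    simp only [Set.mem_setOf_eq] at h
    exact ⟨(j, k - j), by simp; omega⟩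

private lemma range_diag :
    Set.range (fun n : ℕ => ((n, n) : ℕ × ℕ)) = {p : ℕ × ℕ | p.1 = p.2} := by
  ext ⟨j, k⟩
  constructor
  · rintro ⟨m, h⟩
    simp only [Prod.mk.injEq] at h
    simp only [Set.mem_setOf_eq]
    omega
  · intro h
    simp only [Set.mem_setOf_eq] at h
    exact ⟨j, by simp; omega⟩

/-- Core combinatorial identity for double sums. -/
private lemma core_sum (F : ℕ × ℕ → ℝ) (hF : Summable F) :
    (∑' p : ℕ × ℕ, F p) + ∑' n : ℕ, F (n, n) =
      (∑' p : ℕ × ℕ, F (p.1 + p.2, p.1)) + ∑' p : ℕ × ℕ, F (p.1, p.1 + p.2) := by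
  have he1 : Function.Injective (fun p : ℕ × ℕ => ((p.1 + p.2, p.1) : ℕ × ℕ)) := by
    intro p p' h
    simp only [Prod.mk.injEq] at h
    exact Prod.ext (by omega) (by omega)
  have he2 : Function.Injective (fun p : ℕ × ℕ => ((p.1, p.1 + p.2) : ℕ × ℕ)) := by
    intro p p' h
    simp only [Prod.mk.injEq] at h
    exact Prod.ext (by omega) (by omega)
  have hd : Function.Injective (fun n : ℕ => ((n, n) : ℕ × ℕ)) := by
    intro m n h; simpa using congrArg Prod.fst h
  have h1 : ∑' p : ℕ × ℕ, F (p.1 + p.2, p.1)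
      = ∑' x : {p : ℕ × ℕ | p.2 ≤ p.1}, F x := by
    rw [← range_e1, tsum_range F he1]
  have h2 : ∑' p : ℕ × ℕ, F (p.1, p.1 + p.2)
      = ∑' x : {p : ℕ × ℕ | p.1 ≤ p.2}, F x := by
    rw [← range_e2, tsum_range F he2]
  have h3 : ∑' n : ℕ, F (n, n) = ∑' x : {p : ℕ × ℕ | p.1 = p.2}, F x := by
    rw [← range_diag, tsum_range F hd]
  have hsplit : {p : ℕ × ℕ | p.1 ≤ p.2} =
      ({p : ℕ × ℕ | p.2 ≤ p.1}ᶜ ∪ {p : ℕ × ℕ | p.1 = p.2}) := by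
    ext ⟨j, k⟩
    simp only [Set.mem_setOf_eq, Set.mem_union, Set.mem_compl_iff]
    omega
  have hdisj : Disjoint ({p : ℕ × ℕ | p.2 ≤ p.1}ᶜ) {p : ℕ × ℕ | p.1 = p.2} := by
    rw [Set.disjoint_left]
    rintro ⟨j, k⟩ h1 h2
    simp only [Set.mem_compl_iff, Set.mem_setOf_eq] at h1 h2
    omega
  have h4 : ∑' x : {p : ℕ × ℕ | p.1 ≤ p.2}, F x =
      (∑' x : ({p : ℕ × ℕ | p.2 ≤ p.1}ᶜ : Set (ℕ × ℕ)), F x) +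
        ∑' x : {p : ℕ × ℕ | p.1 = p.2}, F x := by
    rw [hsplit]
    exact Summable.tsum_union_disjoint hdisj (hF.subtype _) (hF.subtype _)
  have h5 : (∑' x : {p : ℕ × ℕ | p.2 ≤ p.1}, F x) +
      (∑' x : ({p : ℕ × ℕ | p.2 ≤ p.1}ᶜ : Set (ℕ × ℕ)), F x) = ∑' p, F p :=
    Summable.tsum_subtype_add_tsum_subtype_compl hF _
  rw [h1, h2, h3, h4, ← h5]
  ring

/-- Jackson's integral satisfies the Rota–Baxter-type relation
`J[f]·J[g] + (1−q)·J[f·g·id] = J[J[f]·g + f·J[g]]`, under the stated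
summability hypotheses. -/
theorem jacksonIntegral_rota_baxter
    (q : ℝ) (hq0 : 0 < q) (hq1 : q < 1) (f g : ℝ → ℝ) (x : ℝ)
    (hf : ∀ m : ℕ, Summable (fun n : ℕ =>
      f ((x * q ^ m) * q ^ n) * ((x * q ^ m) * q ^ n)))
    (hg : ∀ m : ℕ, Summable (fun n : ℕ =>
      g ((x * q ^ m) * q ^ n) * ((x * q ^ m) * q ^ n)))
    (hfg : Summable (fun p : ℕ × ℕ =>
      f (x * q ^ p.1) * (x * q ^ p.1) * (g (x * q ^ p.2) * (x * q ^ p.2)))) :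
    jacksonIntegral q f x * jacksonIntegral q g x +
      (1 - q) * jacksonIntegral q (fun y => f y * g y * y) x =
      jacksonIntegral q
        (fun y => jacksonIntegral q f y * g y + f y * jacksonIntegral q g y) x := by
  set a : ℕ → ℝ := fun n => f (x * q ^ n) * (x * q ^ n) with ha
  set b : ℕ → ℝ := fun n => g (x * q ^ n) * (x * q ^ n) with hb
  set F : ℕ × ℕ → ℝ := fun p => a p.1 * b p.2 with hFdef
  have hF : Summable F := hfg
  have he1 : Function.Injective (fun p : ℕ × ℕ => ((p.1 + p.2, p.1) : ℕ × ℕ)) := by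
    intro p p' h
    simp only [Prod.mk.injEq] at h
    exact Prod.ext (by omega) (by omega)
  have he2 : Function.Injective (fun p : ℕ × ℕ => ((p.1, p.1 + p.2) : ℕ × ℕ)) := by
    intro p p' h
    simp only [Prod.mk.injEq] at h
    exact Prod.ext (by omega) (by omega)
  have hG : Summable (fun p : ℕ × ℕ => F (p.1 + p.2, p.1)) := hF.comp_injective he1
  have hH : Summable (fun p : ℕ × ℕ => F (p.1, p.1 + p.2)) := hF.comp_injective he2
  -- summability of a and b
  have hA : Summable a := by
    have := hf 0
    simpa using this
  have hB : Summable b := by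
    have := hg 0
    simpa using this
  -- shifted Jackson integrals
  have hxm : ∀ m n : ℕ, x * q ^ m * q ^ n = x * q ^ (m + n) := by
    intro m n; rw [mul_assoc, ← pow_add]
  have keyf : ∀ m : ℕ, jacksonIntegral q f (x * q ^ m)
      = (1 - q) * ∑' n : ℕ, a (m + n) := by
    intro m
    unfold jacksonIntegral
    congr 1
    exact tsum_congr fun n => by rw [hxm]
  have keyg : ∀ m : ℕ, jacksonIntegral q g (x * q ^ m)
      = (1 - q) * ∑' n : ℕ, b (m + n) := by
    intro m
    unfold jacksonIntegral
    congr 1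
    exact tsum_congr fun n => by rw [hxm]
  -- the double sum equals product of sums
  have hprod : ∑' p : ℕ × ℕ, F p = (∑' n, a n) * (∑' n, b n) := by
    rw [Summable.tsum_prod' hF fun m => hF.prod_factor m]
    calc ∑' (m : ℕ) (n : ℕ), a m * b n = ∑' m : ℕ, a m * ∑' n, b n := by
          exact tsum_congr fun m => tsum_mul_left
      _ = (∑' n, a n) * (∑' n, b n) := tsum_mul_right
  -- iterated forms of the two shifted sums
  have hGsum : ∑' p : ℕ × ℕ, F (p.1 + p.2, p.1)
      = ∑' m : ℕ, (∑' n : ℕ, a (m + n)) * b m := by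
    rw [Summable.tsum_prod' hG fun m => hG.prod_factor m]
    refine tsum_congr fun m => ?_
    simp only [hFdef]
    exact tsum_mul_right
  have hHsum : ∑' p : ℕ × ℕ, F (p.1, p.1 + p.2)
      = ∑' m : ℕ, a m * ∑' n : ℕ, b (m + n) := by
    rw [Summable.tsum_prod' hH fun m => hH.prod_factor m]
    refine tsum_congr fun m => ?_
    simp only [hFdef]
    exact tsum_mul_left
  -- summability of the two outer sums
  have hGout : Summable (fun m : ℕ => (∑' n : ℕ, a (m + n)) * b m) := by
    have := hG.prod
    refine this.congr fun m => ?_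
    simp only [hFdef]
    exact tsum_mul_right
  have hHout : Summable (fun m : ℕ => a m * ∑' n : ℕ, b (m + n)) := by
    have := hH.prod
    refine this.congr fun m => ?_
    simp only [hFdef]
    exact tsum_mul_left
  have core := core_sum F hF
  rw [hprod, hGsum, hHsum] at core
  have hdiagF : ∀ n : ℕ, F (n, n) = a n * b n := fun n => by simp only [hFdef]
  have Jf : jacksonIntegral q f x = (1 - q) * ∑' n, a n := rfl
  have Jg : jacksonIntegral q g x = (1 - q) * ∑' n, b n := rfl
  have Jfgid : jacksonIntegral q (fun y => f y * g y * y) x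
      = (1 - q) * ∑' n : ℕ, F (n, n) := by
    rw [jacksonIntegral]
    congr 1
    refine tsum_congr fun n => ?_
    simp only [hFdef, ha, hb]
    ring
  have Jrhs : jacksonIntegral q
        (fun y => jacksonIntegral q f y * g y + f y * jacksonIntegral q g y) x
      = (1 - q) * ((1 - q) *
          ∑' m : ℕ, ((∑' n : ℕ, a (m + n)) * b m + a m * ∑' n : ℕ, b (m + n))) := by
    rw [jacksonIntegral]
    congr 1
    rw [← tsum_mul_left]
    refine tsum_congr fun m => ?_
    rw [keyf m, keyg m]
    simp only [ha, hb]
    ring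
  rw [Jf, Jg, Jfgid, Jrhs, Summable.tsum_add hGout hHout, ← core]
  ring
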